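/- Let F(θ) = (1/2)(1 - (1-2θ)/√(θ² + (1-θ)²)) and Λ(θ) = ∫₀^θ F(t) dt. Then Λ(θ) = (1/2)√(θ² + (1-θ)²) - (1-θ)/2, and for all θ ∈ [0,1]: (θ² + (1-θ)²)·F(θ) + (1 - 2θ)·Λ(θ) = θ/2. -/

import Mathlib

open MeasureTheory Set

/-- The equilibrium cdf of the endogenous test-selection game on `[0,1]`. -/
noncomputable def Feq (θ : ℝ) : ℝ :=
  (1/2) * (1 - (1 - 2*θ) / Real.sqrt (θ^2 + (1-θ)^2))

lemma Qpos (θ : ℝ) : 0 < θ^2 + (1-θ)^2 := by nlinarith [sq_nonneg (2*θ - 1)]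

lemma sqrt_pos' (θ : ℝ) : 0 < Real.sqrt (θ^2 + (1-θ)^2) :=
  Real.sqrt_pos.mpr (Qpos θ)

lemma hasDerivAt_G (θ : ℝ) :
    HasDerivAt (fun x : ℝ => (1/2) * Real.sqrt (x^2 + (1-x)^2) - (1-x)/2) (Feq θ) θ := by
  have hu : HasDerivAt (fun x : ℝ => x^2 + (1-x)^2) (4*θ - 2) θ := by
    have h1 : HasDerivAt (fun x : ℝ => x^2 + (1-x)^2) (2*θ^(2-1)*1 + 2*(1-θ)^(2-1)*(0-1)) θ := by
      exact ((hasDerivAt_id θ).pow 2).add (((hasDerivAt_const θ 1).sub (hasDerivAt_id θ)).pow 2)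
    convert h1 using 1; ring
  have hs := hu.sqrt (ne_of_gt (Qpos θ))
  have h := ((hs.const_mul (1/2 : ℝ)).sub
    (((hasDerivAt_const θ (1:ℝ)).sub (hasDerivAt_id θ)).div_const 2))
  refine h.congr_deriv ?_
  have hne := (sqrt_pos' θ).ne'
  unfold Feq
  field_simp
  ring

lemma cont_Feq : Continuous Feq := by
  unfold Feq
  fun_prop (disch := intro x; exact (sqrt_pos' x).ne')

lemma Lam_eq (θ : ℝ) :
    (∫ t in (0:ℝ)..θ, Feq t) = (1/2) * Real.sqrt (θ^2 + (1-θ)^2) - (1-θ)/2 := by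
  have := intervalIntegral.integral_eq_sub_of_hasDerivAt
    (f := fun x : ℝ => (1/2) * Real.sqrt (x^2 + (1-x)^2) - (1-x)/2)
    (fun x _ => hasDerivAt_G x) (cont_Feq.intervalIntegrable 0 θ)
  rw [this]
  norm_num [Real.sqrt_one]

/-- With `Λ(θ) = ∫₀^θ Feq`, one has `Λ(θ) = (1/2)√(θ²+(1-θ)²) - (1-θ)/2`, and the
equilibrium ("winning probability 1/2") identity
`(θ² + (1-θ)²)·F(θ) + (1-2θ)·Λ(θ) = θ/2` holds for all `θ ∈ [0,1]`. -/
theorem stmt_13 :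
    (∀ θ ∈ Icc (0:ℝ) 1,
      (∫ t in (0:ℝ)..θ, Feq t) = (1/2) * Real.sqrt (θ^2 + (1-θ)^2) - (1-θ)/2) ∧
    (∀ θ ∈ Icc (0:ℝ) 1,
      (θ^2 + (1-θ)^2) * Feq θ + (1 - 2*θ) * (∫ t in (0:ℝ)..θ, Feq t) = θ/2) := by
  refine ⟨fun θ _ => Lam_eq θ, fun θ _ => ?_⟩
  rw [Lam_eq θ]
  have hs := sqrt_pos' θ
  have hsq : Real.sqrt (θ^2 + (1-θ)^2) ^ 2 = θ^2 + (1-θ)^2 :=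
    Real.sq_sqrt (Qpos θ).le
  unfold Feq
  field_simp
  nlinarith [hsq, hs]
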